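/- Example 2 (multicomponent (3+1)-dimensional system): let m, n ∈ ℕ with m > n ≥ 1, and let u₀, …, u_n and v₀, …, v_{m−1} be continuously differentiable real-valued functions of (x, y, z, t) ∈ ℝ⁴. Adopt the conventions u_i = 0 for i > n or i < 0, v_j = 0 for j > m or j < 0, and v_m = (m/n)·u_n. Define f(x,y,z,t,p) = p^{n+1} + Σ_{i=0}^{n} u_i·pⁱ and g(x,y,z,t,p) = p^{m+1} + Σ_{j=0}^{m} v_j·pʲ. Then ∂_t f − ∂_y g + {f, g}_L = 0 holds for all (x, y, z, t, p) ∈ ℝ⁵ (bracket in the variables (x, z, p)) if and only if for every k = 0, …, n+m and every (x, y, z, t): (u_k)_t − (v_k)_y + m·(u_{k−m−1})_z − n·(v_{k−n−1})_z + (n+1)·(v_{k−n})_x − (m+1)·(u_{k−m})_x + Σ_{i=max(0,k−m)}^{min(n,k)} ((k−i−1)·v_{k−i}·(u_i)_z − (i−1)·u_i·(v_{k−i})_z) − Σ_{i=max(0,k+1−m)}^{min(n,k+1)} ((k+1−i)·v_{k+1−i}·(u_i)_x − i·u_i·(v_{k+1−i})_x) = 0. -/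

import Mathlib

/-- Partial derivative of a function on ℝ⁵ in the `i`-th coordinate.
Coordinates: `0 ↦ x`, `1 ↦ y`, `2 ↦ z`, `3 ↦ t`, `4 ↦ p`. -/
noncomputable def pd5 (i : Fin 5) (h : (Fin 5 → ℝ) → ℝ) (r : Fin 5 → ℝ) : ℝ :=
  fderiv ℝ h r (Pi.single i 1)

/-- Partial derivative of a function on ℝ⁴ in the `i`-th coordinate.
Coordinates: `0 ↦ x`, `1 ↦ y`, `2 ↦ z`, `3 ↦ t`. -/
noncomputable def pd4 (i : Fin 4) (h : (Fin 4 → ℝ) → ℝ) (w : Fin 4 → ℝ) : ℝ :=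
  fderiv ℝ h w (Pi.single i 1)

/-- The contact (Lagrange) bracket in the variables `(x, z, p) = (r 0, r 2, r 4)`,
with `(y, t) = (r 1, r 3)` as parameters. -/
noncomputable def cbr5 (h₁ h₂ : (Fin 5 → ℝ) → ℝ) (r : Fin 5 → ℝ) : ℝ :=
  pd5 4 h₁ r * pd5 0 h₂ r - pd5 4 h₂ r * pd5 0 h₁ r
    - r 4 * (pd5 4 h₁ r * pd5 2 h₂ r - pd5 4 h₂ r * pd5 2 h₁ r)
    + h₁ r * pd5 2 h₂ r - h₂ r * pd5 2 h₁ r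

/-- Action of the contact vector field `X_h` in the variables `(x, z, p) = (r 0, r 2, r 4)`,
pointwise in the parameters `(y, t) = (r 1, r 3)`:
`X_h(φ) = hₚ φₓ + (p h_z − hₓ) φₚ + (h − p hₚ) φ_z`. -/
noncomputable def X5 (h φ : (Fin 5 → ℝ) → ℝ) (r : Fin 5 → ℝ) : ℝ :=
  pd5 4 h r * pd5 0 φ r + (r 4 * pd5 2 h r - pd5 0 h r) * pd5 4 φ r
    + (h r - r 4 * pd5 4 h r) * pd5 2 φ r

/-- Projection `(x,y,z,t,p) ↦ (x,y,z,t)`. -/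
def proj45 (r : Fin 5 → ℝ) : Fin 4 → ℝ := fun i => r i.castSucc

open Polynomial Finset

noncomputable def projL : (Fin 5 → ℝ) →L[ℝ] (Fin 4 → ℝ) :=
  ContinuousLinearMap.pi (fun i => ContinuousLinearMap.proj i.castSucc)

lemma projL_apply (r : Fin 5 → ℝ) : projL r = proj45 r := rfl

noncomputable def pi4 : ((Fin 5 → ℝ) →L[ℝ] ℝ) := ContinuousLinearMap.proj 4

lemma pi4_apply (r : Fin 5 → ℝ) : pi4 r = r 4 := rfl

lemma proj45_single_castSucc (j : Fin 4) :
    proj45 (Pi.single (Fin.castSucc j) 1) = Pi.single j 1 := by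
  funext i
  simp only [proj45, Pi.single_apply]
  simp [Fin.castSucc_inj]

lemma proj45_single4 : proj45 (Pi.single (4 : Fin 5) 1) = 0 := by
  funext i
  simp only [proj45, Pi.single_apply]
  have : Fin.castSucc i ≠ 4 := by simp [Fin.ext_iff]; omega
  simp [this]

lemma single_castSucc_4 (j : Fin 4) : (Pi.single (Fin.castSucc j) 1 : (Fin 5 → ℝ)) (4 : Fin 5) = 0 := by
  have h : (4 : Fin 5) ≠ Fin.castSucc j := by simp [Fin.ext_iff]; omega
  rw [Pi.single_apply, if_neg h]

noncomputable def polD (N : ℕ) (a : ℕ → (Fin 4 → ℝ) → ℝ) (r : Fin 5 → ℝ) :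
    ((Fin 5 → ℝ) →L[ℝ] ℝ) :=
  (((N+1 : ℕ) : ℝ) * (r 4)^N) • pi4 +
    ∑ i ∈ range (N+1), ((r 4)^i • ((fderiv ℝ (a i) (proj45 r)).comp projL) +
      (a i (proj45 r) * ((i : ℝ) * (r 4)^(i-1))) • pi4)

lemma hasFDerivAt_poly5 (N : ℕ) (a : ℕ → (Fin 4 → ℝ) → ℝ)
    (ha : ∀ i, ContDiff ℝ 1 (a i)) (r : Fin 5 → ℝ) :
    HasFDerivAt (fun r => (r 4)^(N+1) + ∑ i ∈ range (N+1), a i (proj45 r) * (r 4)^i)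
      (polD N a r) r := by
  have hp4 : HasFDerivAt (fun r : Fin 5 → ℝ => r 4) pi4 r := pi4.hasFDerivAt
  have hpow : ∀ k : ℕ, HasFDerivAt (fun r : Fin 5 → ℝ => (r 4)^k)
      (((k : ℝ) * (r 4)^(k-1)) • pi4) r := by
    intro k
    exact (hasDerivAt_pow k (r 4)).comp_hasFDerivAt r hp4
  have hterm : ∀ i, HasFDerivAt (fun r : Fin 5 → ℝ => a i (proj45 r) * (r 4)^i)
      ((r 4)^i • ((fderiv ℝ (a i) (proj45 r)).comp projL) +
        (a i (proj45 r) * ((i : ℝ) * (r 4)^(i-1))) • pi4) r := by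
    intro i
    have h1 : HasFDerivAt (fun r : Fin 5 → ℝ => a i (proj45 r))
        ((fderiv ℝ (a i) (proj45 r)).comp projL) r := by
      have := (((ha i).differentiable one_ne_zero) (proj45 r)).hasFDerivAt
      exact this.comp r projL.hasFDerivAt
    have := h1.mul (hpow i)
    refine this.congr_fderiv ?_
    ext s
    simp [ContinuousLinearMap.smul_apply]
    ring
  have hsum : HasFDerivAt (fun r : Fin 5 → ℝ => ∑ i ∈ range (N+1), a i (proj45 r) * (r 4)^i)
      (∑ i ∈ range (N+1), ((r 4)^i • ((fderiv ℝ (a i) (proj45 r)).comp projL) +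
        (a i (proj45 r) * ((i : ℝ) * (r 4)^(i-1))) • pi4)) r :=
    HasFDerivAt.fun_sum (fun i _ => hterm i)
  have := (hpow (N+1)).add hsum
  exact this.congr_fderiv rfl

noncomputable def pol (N : ℕ) (a : ℕ → ℝ) : Polynomial ℝ :=
  ∑ i ∈ range N, C (a i) * X ^ i

noncomputable def fpol (N : ℕ) (a : ℕ → ℝ) : Polynomial ℝ := X^(N+1) + pol (N+1) a

lemma eval_pol (N : ℕ) (a : ℕ → ℝ) (p : ℝ) :
    (pol N a).eval p = ∑ i ∈ range N, a i * p ^ i := by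
  simp [pol, eval_finset_sum]

lemma eval_fpol (N : ℕ) (a : ℕ → ℝ) (p : ℝ) :
    (fpol N a).eval p = p^(N+1) + ∑ i ∈ range (N+1), a i * p^i := by
  simp [fpol, eval_pol]

lemma eval_derivative_fpol (N : ℕ) (a : ℕ → ℝ) (p : ℝ) :
    (derivative (fpol N a)).eval p
      = ((N+1 : ℕ) : ℝ) * p^N + ∑ i ∈ range (N+1), a i * ((i:ℝ) * p^(i-1)) := by
  simp only [fpol, pol, derivative_add, derivative_X_pow, map_sum, derivative_C_mul,
    eval_add, eval_mul, eval_C, eval_finset_sum, eval_X, eval_pow, eval_natCast,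
    Nat.add_sub_cancel]

lemma pd5_poly_castSucc (N : ℕ) (a : ℕ → (Fin 4 → ℝ) → ℝ)
    (ha : ∀ i, ContDiff ℝ 1 (a i)) (r : Fin 5 → ℝ) (j : Fin 4) :
    pd5 (Fin.castSucc j)
      (fun r => (r 4)^(N+1) + ∑ i ∈ range (N+1), a i (proj45 r) * (r 4)^i) r
      = (pol (N+1) (fun i => pd4 j (a i) (proj45 r))).eval (r 4) := by
  unfold pd5
  rw [(hasFDerivAt_poly5 N a ha r).fderiv]
  unfold polD
  rw [eval_pol]
  simp only [ContinuousLinearMap.add_apply, ContinuousLinearMap.smul_apply,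
    ContinuousLinearMap.coe_sum', Finset.sum_apply, ContinuousLinearMap.coe_comp',
    Function.comp_apply, smul_eq_mul]
  have hL : projL (Pi.single (Fin.castSucc j) 1) = Pi.single j 1 := by
    rw [projL_apply, proj45_single_castSucc]
  simp only [pi4_apply, single_castSucc_4, hL, mul_zero, zero_add, add_zero]
  apply Finset.sum_congr rfl
  intro i _
  rw [pd4]
  ring
lemma pd5_poly_4 (N : ℕ) (a : ℕ → (Fin 4 → ℝ) → ℝ)
    (ha : ∀ i, ContDiff ℝ 1 (a i)) (r : Fin 5 → ℝ) :
    pd5 4 (fun r => (r 4)^(N+1) + ∑ i ∈ range (N+1), a i (proj45 r) * (r 4)^i) r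
      = (derivative (fpol N (fun i => a i (proj45 r)))).eval (r 4) := by
  unfold pd5
  rw [(hasFDerivAt_poly5 N a ha r).fderiv]
  unfold polD
  rw [eval_derivative_fpol]
  simp only [ContinuousLinearMap.add_apply, ContinuousLinearMap.smul_apply,
    ContinuousLinearMap.coe_sum', Finset.sum_apply, ContinuousLinearMap.coe_comp',
    Function.comp_apply, smul_eq_mul, pi4_apply]
  have h4 : (Pi.single (4 : Fin 5) 1 : Fin 5 → ℝ) 4 = 1 := Pi.single_eq_same _ _
  have hL : projL (Pi.single (4 : Fin 5) 1) = 0 := by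
    rw [projL_apply, proj45_single4]
  simp only [h4, hL, map_zero, mul_one, mul_zero, zero_add]

lemma poly5_eval (N : ℕ) (a : ℕ → (Fin 4 → ℝ) → ℝ) (r : Fin 5 → ℝ) :
    (r 4)^(N+1) + ∑ i ∈ range (N+1), a i (proj45 r) * (r 4)^i
      = (fpol N (fun i => a i (proj45 r))).eval (r 4) := by
  rw [eval_fpol]
noncomputable def QQ (n m : ℕ) (a b at' by' ax bx az bz : ℕ → ℝ) : Polynomial ℝ :=
  pol (n+1) at' - pol (m+1) by'
  + derivative (fpol n a) * pol (m+1) bx - derivative (fpol m b) * pol (n+1) ax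
  - X * (derivative (fpol n a) * pol (m+1) bz) + X * (derivative (fpol m b) * pol (n+1) az)
  + fpol n a * pol (m+1) bz - fpol m b * pol (n+1) az

lemma fin5_0 : (0 : Fin 5) = Fin.castSucc (0 : Fin 4) := by decide
lemma fin5_1 : (1 : Fin 5) = Fin.castSucc (1 : Fin 4) := by decide
lemma fin5_2 : (2 : Fin 5) = Fin.castSucc (2 : Fin 4) := by decide
lemma fin5_3 : (3 : Fin 5) = Fin.castSucc (3 : Fin 4) := by decide

lemma E_eval (n m : ℕ) (a b : ℕ → (Fin 4 → ℝ) → ℝ)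
    (ha : ∀ i, ContDiff ℝ 1 (a i)) (hb : ∀ j, ContDiff ℝ 1 (b j))
    (f g : (Fin 5 → ℝ) → ℝ)
    (hf : f = fun r => (r 4)^(n+1) + ∑ i ∈ range (n+1), a i (proj45 r) * (r 4)^i)
    (hg : g = fun r => (r 4)^(m+1) + ∑ j ∈ range (m+1), b j (proj45 r) * (r 4)^j)
    (r : Fin 5 → ℝ) :
    pd5 3 f r - pd5 1 g r + cbr5 f g r
      = (QQ n m (fun i => a i (proj45 r)) (fun j => b j (proj45 r))
          (fun i => pd4 3 (a i) (proj45 r)) (fun j => pd4 1 (b j) (proj45 r))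
          (fun i => pd4 0 (a i) (proj45 r)) (fun j => pd4 0 (b j) (proj45 r))
          (fun i => pd4 2 (a i) (proj45 r)) (fun j => pd4 2 (b j) (proj45 r))).eval (r 4) := by
  subst hf hg
  have hf3 := pd5_poly_castSucc n a ha r 3
  have hg1 := pd5_poly_castSucc m b hb r 1
  have hf0 := pd5_poly_castSucc n a ha r 0
  have hg0 := pd5_poly_castSucc m b hb r 0
  have hf2 := pd5_poly_castSucc n a ha r 2
  have hg2 := pd5_poly_castSucc m b hb r 2
  have hf4 := pd5_poly_4 n a ha r
  have hg4 := pd5_poly_4 m b hb r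
  have hfe := poly5_eval n a r
  have hge := poly5_eval m b r
  unfold cbr5
  rw [fin5_0, fin5_1, fin5_2, fin5_3]
  simp only [hf3, hg1, hf0, hg0, hf2, hg2, hf4, hg4]
  rw [hfe, hge]
  simp only [QQ, eval_add, eval_sub, eval_mul, eval_X]
  ring
lemma coeff_pol (N : ℕ) (a : ℕ → ℝ) (k : ℕ) :
    (pol N a).coeff k = if k < N then a k else 0 := by
  simp only [pol, finset_sum_coeff, coeff_C_mul, coeff_X_pow, mul_ite, mul_one, mul_zero]
  rw [Finset.sum_ite_eq (range N) k a]
  simp [Finset.mem_range]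

lemma coeff_pol' (N : ℕ) (a : ℕ → ℝ) (h0 : ∀ i, N ≤ i → a i = 0) (k : ℕ) :
    (pol N a).coeff k = a k := by
  rw [coeff_pol]
  split_ifs with h
  · rfl
  · exact (h0 k (by omega)).symm

lemma coeff_fpol (N : ℕ) (a : ℕ → ℝ) (h0 : ∀ i, N + 1 ≤ i → a i = 0) (k : ℕ) :
    (fpol N a).coeff k = a k + if k = N + 1 then 1 else 0 := by
  rw [fpol, coeff_add, coeff_pol' (N+1) a h0, coeff_X_pow, add_comm]

lemma coeff_derivative_fpol (N : ℕ) (a : ℕ → ℝ) (h0 : ∀ i, N + 1 ≤ i → a i = 0) (k : ℕ) :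
    (derivative (fpol N a)).coeff k
      = ((k + 1 : ℕ) : ℝ) * a (k+1) + if k = N then ((N + 1 : ℕ) : ℝ) else 0 := by
  rw [coeff_derivative, coeff_fpol N a h0]
  by_cases h : k = N
  · subst h
    rw [if_pos rfl, if_pos rfl]
    push_cast; ring
  · have h' : ¬(k + 1 = N + 1) := by omega
    rw [if_neg h', if_neg h]
    push_cast; ring

lemma coeff_mul_range (P Q : Polynomial ℝ) (k : ℕ) :
    (P * Q).coeff k = ∑ i ∈ range (k+1), P.coeff i * Q.coeff (k-i) := by
  rw [coeff_mul, Finset.Nat.sum_antidiagonal_eq_sum_range_succ_mk]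

lemma coeff_X_mul' (P : Polynomial ℝ) (k : ℕ) :
    (X * P).coeff k = if k = 0 then 0 else P.coeff (k-1) := by
  cases k with
  | zero => simp [Polynomial.mul_coeff_zero]
  | succ k => simp [Polynomial.coeff_X_mul]
lemma sum_reflect_gen (e d : ℕ → ℝ) (K : ℕ) :
    ∑ i ∈ range (K+1), e (K-i) * d i = ∑ i ∈ range (K+1), e i * d (K-i) := by
  rw [← Finset.sum_range_reflect (fun i => e i * d (K-i)) (K+1)]
  apply Finset.sum_congr rfl
  intro j hj
  simp only [Finset.mem_range] at hj
  have h1 : K + 1 - 1 - j = K - j := by omega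
  have h2 : K - (K - j) = j := Nat.sub_sub_self (by omega)
  rw [h1, h2]

lemma sum_reflect_z (c d : ℕ → ℝ) (K : ℕ) :
    ∑ i ∈ range (K+1), (((K-i : ℕ) : ℝ) - 1) * c (K-i) * d i
      = ∑ i ∈ range (K+1), ((i:ℝ) - 1) * c i * d (K-i) :=
  sum_reflect_gen (fun j => ((j:ℝ) - 1) * c j) d K

lemma sum_reflect_x (c d : ℕ → ℝ) (K : ℕ) :
    ∑ i ∈ range (K+1), ((K-i : ℕ) : ℝ) * c (K-i) * d i
      = ∑ i ∈ range (K+1), (i:ℝ) * c i * d (K-i) :=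
  sum_reflect_gen (fun j => (j:ℝ) * c j) d K

lemma sum_shift (c d : ℕ → ℝ) (K : ℕ) :
    ∑ i ∈ range (K+2), (i:ℝ) * c i * d (K+1-i)
      = ∑ i ∈ range (K+1), ((i:ℝ)+1) * c (i+1) * d (K-i) := by
  rw [Finset.sum_range_succ' (fun i => (i:ℝ) * c i * d (K+1-i)) (K+1)]
  simp only [Nat.cast_zero, zero_mul, add_zero, Nat.succ_sub_succ]
  apply Finset.sum_congr rfl
  intro i _
  push_cast
  ring

lemma sum_coef_sub (c d : ℕ → ℝ) (K : ℕ) :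
    ∑ i ∈ range (K+1), ((i:ℝ) - 1) * c i * d (K-i)
      = (∑ i ∈ range (K+1), (i:ℝ) * c i * d (K-i)) - ∑ i ∈ range (K+1), c i * d (K-i) := by
  rw [← Finset.sum_sub_distrib]
  exact Finset.sum_congr rfl (fun i _ => by ring)

lemma coeff_dfpol_mul_pol (n m : ℕ) (a c : ℕ → ℝ)
    (ha : ∀ i, n + 1 ≤ i → a i = 0) (hc : ∀ j, m + 1 ≤ j → c j = 0) (k : ℕ) :
    (derivative (fpol n a) * pol (m+1) c).coeff k
      = (∑ i ∈ range (k+1), ((i:ℝ)+1) * a (i+1) * c (k-i))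
        + (if n ≤ k then ((n:ℝ)+1) * c (k-n) else 0) := by
  rw [coeff_mul_range]
  have h : ∀ i ∈ range (k+1),
      (derivative (fpol n a)).coeff i * (pol (m+1) c).coeff (k-i)
        = ((i:ℝ)+1) * a (i+1) * c (k-i)
          + (if i = n then ((n:ℝ)+1) * c (k-i) else 0) := by
    intro i _
    rw [coeff_derivative_fpol n a ha, coeff_pol' (m+1) c hc, add_mul, ite_mul, zero_mul]
    congr 1
    · push_cast; ring
    · split_ifs with hh
      · push_cast; ring
      · rfl
  rw [Finset.sum_congr rfl h, Finset.sum_add_distrib,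
    Finset.sum_ite_eq' (range (k+1)) n (fun i => ((n:ℝ)+1) * c (k-i))]
  simp [Finset.mem_range, Nat.lt_succ_iff]

lemma coeff_fpol_mul_pol (n m : ℕ) (a c : ℕ → ℝ)
    (ha : ∀ i, n + 1 ≤ i → a i = 0) (hc : ∀ j, m + 1 ≤ j → c j = 0) (k : ℕ) :
    (fpol n a * pol (m+1) c).coeff k
      = (∑ i ∈ range (k+1), a i * c (k-i))
        + (if n + 1 ≤ k then c (k-(n+1)) else 0) := by
  rw [coeff_mul_range]
  have h : ∀ i ∈ range (k+1),
      (fpol n a).coeff i * (pol (m+1) c).coeff (k-i)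
        = a i * c (k-i) + (if i = n+1 then c (k-i) else 0) := by
    intro i _
    rw [coeff_fpol n a ha, coeff_pol' (m+1) c hc, add_mul, ite_mul, zero_mul, one_mul]
  rw [Finset.sum_congr rfl h, Finset.sum_add_distrib,
    Finset.sum_ite_eq' (range (k+1)) (n+1) (fun i => c (k-i))]
  simp only [Finset.mem_range, Nat.lt_succ_iff]

lemma coeff_X_mul_dfpol_mul_pol (n m : ℕ) (a c : ℕ → ℝ)
    (ha : ∀ i, n + 1 ≤ i → a i = 0) (hc : ∀ j, m + 1 ≤ j → c j = 0) (k : ℕ) :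
    (X * (derivative (fpol n a) * pol (m+1) c)).coeff k
      = (∑ i ∈ range (k+1), (i:ℝ) * a i * c (k-i))
        + (if n + 1 ≤ k then ((n:ℝ)+1) * c (k-(n+1)) else 0) := by
  rw [coeff_X_mul']
  cases k with
  | zero => simp
  | succ j =>
    rw [if_neg (Nat.succ_ne_zero j)]
    have hj : j + 1 - 1 = j := rfl
    rw [hj, coeff_dfpol_mul_pol n m a c ha hc j]
    have h1 : ∑ i ∈ range (j+2), (i:ℝ) * a i * c (j+1-i)
        = ∑ i ∈ range (j+1), ((i:ℝ)+1) * a (i+1) * c (j-i) := sum_shift a c j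
    rw [h1]
    congr 1
    split_ifs with h2 h3 h3
    · have : j + 1 - (n+1) = j - n := by omega
      rw [this]
    · omega
    · omega
    · rfl
lemma coeff_QQ (n m : ℕ) (a b at' by' ax bx az bz : ℕ → ℝ)
    (ha : ∀ i, n + 1 ≤ i → a i = 0) (hat : ∀ i, n + 1 ≤ i → at' i = 0)
    (hax : ∀ i, n + 1 ≤ i → ax i = 0) (haz : ∀ i, n + 1 ≤ i → az i = 0)
    (hb : ∀ j, m + 1 ≤ j → b j = 0) (hby : ∀ j, m + 1 ≤ j → by' j = 0)
    (hbx : ∀ j, m + 1 ≤ j → bx j = 0) (hbz : ∀ j, m + 1 ≤ j → bz j = 0)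
    (k : ℕ) :
    (QQ n m a b at' by' ax bx az bz).coeff k =
      at' k - by' k
      + (if m + 1 ≤ k then (m : ℝ) * az (k - (m+1)) else 0)
      - (if n + 1 ≤ k then (n : ℝ) * bz (k - (n+1)) else 0)
      + (if n ≤ k then ((n : ℝ) + 1) * bx (k - n) else 0)
      - (if m ≤ k then ((m : ℝ) + 1) * ax (k - m) else 0)
      + ∑ i ∈ range (k+1),
          ((((k - i : ℕ) : ℝ) - 1) * b (k - i) * az i - ((i : ℝ) - 1) * a i * bz (k - i))
      - ∑ i ∈ range (k+2),
          (((k + 1 - i : ℕ) : ℝ) * b (k + 1 - i) * ax i - (i : ℝ) * a i * bx (k + 1 - i)) := by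
  have hTZ : ∑ i ∈ range (k+1),
        ((((k - i : ℕ) : ℝ) - 1) * b (k - i) * az i - ((i : ℝ) - 1) * a i * bz (k - i))
      = ((∑ i ∈ range (k+1), (i:ℝ) * b i * az (k-i)) - ∑ i ∈ range (k+1), b i * az (k-i))
        - ((∑ i ∈ range (k+1), (i:ℝ) * a i * bz (k-i)) - ∑ i ∈ range (k+1), a i * bz (k-i)) := by
    rw [Finset.sum_sub_distrib, sum_reflect_z b az k, sum_coef_sub b az k, sum_coef_sub a bz k]
  have hTX : ∑ i ∈ range (k+2),
        (((k + 1 - i : ℕ) : ℝ) * b (k + 1 - i) * ax i - (i : ℝ) * a i * bx (k + 1 - i))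
      = (∑ i ∈ range (k+1), ((i:ℝ)+1) * b (i+1) * ax (k-i))
        - ∑ i ∈ range (k+1), ((i:ℝ)+1) * a (i+1) * bx (k-i) := by
    rw [Finset.sum_sub_distrib, sum_reflect_x b ax (k+1), sum_shift b ax k, sum_shift a bx k]
  rw [hTZ, hTX]
  simp only [QQ, coeff_add, coeff_sub]
  rw [coeff_pol' (n+1) at' hat, coeff_pol' (m+1) by' hby,
    coeff_dfpol_mul_pol n m a bx ha hbx, coeff_dfpol_mul_pol m n b ax hb hax,
    coeff_X_mul_dfpol_mul_pol n m a bz ha hbz, coeff_X_mul_dfpol_mul_pol m n b az hb haz,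
    coeff_fpol_mul_pol n m a bz ha hbz, coeff_fpol_mul_pol m n b az hb haz]
  split_ifs <;> ring
lemma pd4_zero (j : Fin 4) (w : Fin 4 → ℝ) : pd4 j (0 : (Fin 4 → ℝ) → ℝ) w = 0 := by
  have : (0 : (Fin 4 → ℝ) → ℝ) = fun _ => (0:ℝ) := rfl
  rw [pd4, this, fderiv_fun_const]
  simp

lemma sum_Icc_int (K : ℕ) (t : ℤ → ℝ) :
    ∑ i ∈ Finset.Icc (0:ℤ) (K:ℤ), t i = ∑ i ∈ range (K+1), t (i:ℤ) := by
  apply Finset.sum_nbij' (fun i : ℤ => i.toNat) (fun i : ℕ => (i:ℤ))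
  · intro a ha
    simp only [Finset.mem_Icc] at ha
    simp only [Finset.mem_range]
    omega
  · intro a ha
    simp only [Finset.mem_range] at ha
    simp only [Finset.mem_Icc]
    omega
  · intro a ha
    simp only [Finset.mem_Icc] at ha
    omega
  · intro a _
    omega
  · intro a ha
    simp only [Finset.mem_Icc] at ha
    congr 1
    omega
lemma sum_bridge (nn mm : ℤ) (K : ℕ) (t : ℤ → ℝ)
    (h1 : ∀ i : ℤ, nn < i → t i = 0) (h2 : ∀ i : ℤ, i < (K:ℤ) - mm → t i = 0) :
    ∑ i ∈ Finset.Icc (max 0 ((K:ℤ) - mm)) (min nn (K:ℤ)), t i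
      = ∑ i ∈ range (K+1), t (i:ℤ) := by
  rw [← sum_Icc_int]
  apply Finset.sum_subset
  · exact Finset.Icc_subset_Icc (le_max_left _ _) (min_le_right _ _)
  · intro x hx hx2
    simp only [Finset.mem_Icc] at hx hx2
    have : nn < x ∨ x < (K:ℤ) - mm := by omega
    rcases this with h | h
    · exact h1 x h
    · exact h2 x h
lemma sysN_eq_sysZ (m n : ℕ) (u v : ℤ → (Fin 4 → ℝ) → ℝ)
    (hu0 : ∀ i : ℤ, i < 0 ∨ (n : ℤ) < i → u i = 0)
    (hv0 : ∀ j : ℤ, j < 0 ∨ (m : ℤ) < j → v j = 0)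
    (k : ℕ) (w : Fin 4 → ℝ) :
    pd4 3 (u (k:ℤ)) w - pd4 1 (v (k:ℤ)) w
      + (if m + 1 ≤ k then (m : ℝ) * pd4 2 (u ((k - (m+1) : ℕ) : ℤ)) w else 0)
      - (if n + 1 ≤ k then (n : ℝ) * pd4 2 (v ((k - (n+1) : ℕ) : ℤ)) w else 0)
      + (if n ≤ k then ((n : ℝ) + 1) * pd4 0 (v ((k - n : ℕ) : ℤ)) w else 0)
      - (if m ≤ k then ((m : ℝ) + 1) * pd4 0 (u ((k - m : ℕ) : ℤ)) w else 0)
      + ∑ i ∈ range (k+1),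
          ((((k - i : ℕ) : ℝ) - 1) * v ((k - i : ℕ) : ℤ) w * pd4 2 (u (i:ℤ)) w
            - ((i : ℝ) - 1) * u (i:ℤ) w * pd4 2 (v ((k - i : ℕ) : ℤ)) w)
      - ∑ i ∈ range (k+2),
          (((k + 1 - i : ℕ) : ℝ) * v ((k + 1 - i : ℕ) : ℤ) w * pd4 0 (u (i:ℤ)) w
            - (i : ℝ) * u (i:ℤ) w * pd4 0 (v ((k + 1 - i : ℕ) : ℤ)) w)
    =
    pd4 3 (u (k : ℤ)) w - pd4 1 (v (k : ℤ)) w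
      + (m : ℝ) * pd4 2 (u ((k : ℤ) - (m : ℤ) - 1)) w
      - (n : ℝ) * pd4 2 (v ((k : ℤ) - (n : ℤ) - 1)) w
      + ((n : ℝ) + 1) * pd4 0 (v ((k : ℤ) - (n : ℤ))) w
      - ((m : ℝ) + 1) * pd4 0 (u ((k : ℤ) - (m : ℤ))) w
      + ∑ i ∈ Finset.Icc (max 0 ((k : ℤ) - (m : ℤ))) (min (n : ℤ) (k : ℤ)),
          ((((k : ℤ) - i - 1 : ℤ) : ℝ) * v ((k : ℤ) - i) w * pd4 2 (u i) w
            - (((i - 1 : ℤ) : ℝ)) * u i w * pd4 2 (v ((k : ℤ) - i)) w)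
      - ∑ i ∈ Finset.Icc (max 0 ((k : ℤ) + 1 - (m : ℤ))) (min (n : ℤ) ((k : ℤ) + 1)),
          ((((k : ℤ) + 1 - i : ℤ) : ℝ) * v ((k : ℤ) + 1 - i) w * pd4 0 (u i) w
            - ((i : ℤ) : ℝ) * u i w * pd4 0 (v ((k : ℤ) + 1 - i)) w) := by
  have e3 : (if m + 1 ≤ k then (m : ℝ) * pd4 2 (u ((k - (m+1) : ℕ) : ℤ)) w else 0)
      = (m : ℝ) * pd4 2 (u ((k : ℤ) - (m : ℤ) - 1)) w := by
    split_ifs with h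
    · have hidx : ((k - (m+1) : ℕ) : ℤ) = (k:ℤ) - (m:ℤ) - 1 := by omega
      rw [hidx]
    · rw [hu0 ((k : ℤ) - (m : ℤ) - 1) (Or.inl (by omega)), pd4_zero, mul_zero]
  have e4 : (if n + 1 ≤ k then (n : ℝ) * pd4 2 (v ((k - (n+1) : ℕ) : ℤ)) w else 0)
      = (n : ℝ) * pd4 2 (v ((k : ℤ) - (n : ℤ) - 1)) w := by
    split_ifs with h
    · have hidx : ((k - (n+1) : ℕ) : ℤ) = (k:ℤ) - (n:ℤ) - 1 := by omega
      rw [hidx]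
    · rw [hv0 ((k : ℤ) - (n : ℤ) - 1) (Or.inl (by omega)), pd4_zero, mul_zero]
  have e5 : (if n ≤ k then ((n : ℝ) + 1) * pd4 0 (v ((k - n : ℕ) : ℤ)) w else 0)
      = ((n : ℝ) + 1) * pd4 0 (v ((k : ℤ) - (n : ℤ))) w := by
    split_ifs with h
    · have hidx : ((k - n : ℕ) : ℤ) = (k:ℤ) - (n:ℤ) := by omega
      rw [hidx]
    · rw [hv0 ((k : ℤ) - (n : ℤ)) (Or.inl (by omega)), pd4_zero, mul_zero]
  have e6 : (if m ≤ k then ((m : ℝ) + 1) * pd4 0 (u ((k - m : ℕ) : ℤ)) w else 0)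
      = ((m : ℝ) + 1) * pd4 0 (u ((k : ℤ) - (m : ℤ))) w := by
    split_ifs with h
    · have hidx : ((k - m : ℕ) : ℤ) = (k:ℤ) - (m:ℤ) := by omega
      rw [hidx]
    · rw [hu0 ((k : ℤ) - (m : ℤ)) (Or.inl (by omega)), pd4_zero, mul_zero]
  have eZ : ∑ i ∈ Finset.Icc (max 0 ((k : ℤ) - (m : ℤ))) (min (n : ℤ) (k : ℤ)),
        ((((k : ℤ) - i - 1 : ℤ) : ℝ) * v ((k : ℤ) - i) w * pd4 2 (u i) w
          - (((i - 1 : ℤ) : ℝ)) * u i w * pd4 2 (v ((k : ℤ) - i)) w)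
      = ∑ i ∈ range (k+1),
          ((((k - i : ℕ) : ℝ) - 1) * v ((k - i : ℕ) : ℤ) w * pd4 2 (u (i:ℤ)) w
            - ((i : ℝ) - 1) * u (i:ℤ) w * pd4 2 (v ((k - i : ℕ) : ℤ)) w) := by
    rw [sum_bridge (n:ℤ) (m:ℤ) k _ ?_ ?_]
    · apply Finset.sum_congr rfl
      intro i hi
      simp only [Finset.mem_range] at hi
      have hki : (k : ℤ) - (i:ℤ) = ((k - i : ℕ) : ℤ) := by omega
      rw [hki]
      push_cast [Nat.cast_sub (by omega : i ≤ k)]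
      ring
    · intro i hi
      rw [hu0 i (Or.inr hi), pd4_zero]
      simp
    · intro i hi
      rw [hv0 ((k:ℤ) - i) (Or.inr (by omega)), pd4_zero]
      simp
  have eX : ∑ i ∈ Finset.Icc (max 0 ((k : ℤ) + 1 - (m : ℤ))) (min (n : ℤ) ((k : ℤ) + 1)),
        ((((k : ℤ) + 1 - i : ℤ) : ℝ) * v ((k : ℤ) + 1 - i) w * pd4 0 (u i) w
          - ((i : ℤ) : ℝ) * u i w * pd4 0 (v ((k : ℤ) + 1 - i)) w)
      = ∑ i ∈ range (k+2),
          (((k + 1 - i : ℕ) : ℝ) * v ((k + 1 - i : ℕ) : ℤ) w * pd4 0 (u (i:ℤ)) w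
            - (i : ℝ) * u (i:ℤ) w * pd4 0 (v ((k + 1 - i : ℕ) : ℤ)) w) := by
    have hcast : ((k:ℤ) + 1 - (m:ℤ)) = (((k+1 : ℕ)):ℤ) - (m:ℤ) := by push_cast; ring
    have hcast2 : ((k:ℤ) + 1) = (((k+1 : ℕ)):ℤ) := by push_cast; ring
    rw [hcast, hcast2, sum_bridge (n:ℤ) (m:ℤ) (k+1) _ ?_ ?_]
    · apply Finset.sum_congr rfl
      intro i hi
      simp only [Finset.mem_range] at hi
      have hki : (((k+1 : ℕ)):ℤ) - (i:ℤ) = ((k + 1 - i : ℕ) : ℤ) := by omega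
      rw [hki]
      push_cast [Nat.cast_sub (by omega : i ≤ k + 1)]
      ring
    · intro i hi
      rw [hu0 i (Or.inr hi), pd4_zero]
      simp
    · intro i hi
      rw [hv0 ((((k+1 : ℕ)):ℤ) - i) (Or.inr (by omega)), pd4_zero]
      simp
  rw [e3, e4, e5, e6, eZ, eX]
lemma pd4_const_mul (j : Fin 4) (c : ℝ) (h : (Fin 4 → ℝ) → ℝ) (hh : ContDiff ℝ 1 h)
    (w : Fin 4 → ℝ) : pd4 j (fun x => c * h x) w = c * pd4 j h w := by
  unfold pd4
  rw [fderiv_const_mul ((hh.differentiable one_ne_zero).differentiableAt)]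
  simp

lemma sysN_vanish (m n : ℕ) (hmn : m > n) (hn : 1 ≤ n) (u v : ℤ → (Fin 4 → ℝ) → ℝ)
    (hu : ∀ i : ℤ, ContDiff ℝ 1 (u i))
    (hu0 : ∀ i : ℤ, i < 0 ∨ (n : ℤ) < i → u i = 0)
    (hv0 : ∀ j : ℤ, j < 0 ∨ (m : ℤ) < j → v j = 0)
    (hvm : v (m : ℤ) = fun w => ((m : ℝ) / (n : ℝ)) * u (n : ℤ) w)
    (k : ℕ) (hk : n + m + 1 ≤ k) (w : Fin 4 → ℝ) :
    pd4 3 (u (k:ℤ)) w - pd4 1 (v (k:ℤ)) w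
      + (if m + 1 ≤ k then (m : ℝ) * pd4 2 (u ((k - (m+1) : ℕ) : ℤ)) w else 0)
      - (if n + 1 ≤ k then (n : ℝ) * pd4 2 (v ((k - (n+1) : ℕ) : ℤ)) w else 0)
      + (if n ≤ k then ((n : ℝ) + 1) * pd4 0 (v ((k - n : ℕ) : ℤ)) w else 0)
      - (if m ≤ k then ((m : ℝ) + 1) * pd4 0 (u ((k - m : ℕ) : ℤ)) w else 0)
      + ∑ i ∈ range (k+1),
          ((((k - i : ℕ) : ℝ) - 1) * v ((k - i : ℕ) : ℤ) w * pd4 2 (u (i:ℤ)) w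
            - ((i : ℝ) - 1) * u (i:ℤ) w * pd4 2 (v ((k - i : ℕ) : ℤ)) w)
      - ∑ i ∈ range (k+2),
          (((k + 1 - i : ℕ) : ℝ) * v ((k + 1 - i : ℕ) : ℤ) w * pd4 0 (u (i:ℤ)) w
            - (i : ℝ) * u (i:ℤ) w * pd4 0 (v ((k + 1 - i : ℕ) : ℤ)) w)
      = 0 := by
  have hA : pd4 3 (u (k:ℤ)) w = 0 := by rw [hu0 _ (Or.inr (by omega)), pd4_zero]
  have hB : pd4 1 (v (k:ℤ)) w = 0 := by rw [hv0 _ (Or.inr (by omega)), pd4_zero]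
  have h3 : m + 1 ≤ k := by omega
  have h4 : n + 1 ≤ k := by omega
  have h5 : n ≤ k := by omega
  have h6 : m ≤ k := by omega
  rw [if_pos h3, if_pos h4, if_pos h5, if_pos h6]
  have hC : pd4 0 (v ((k - n : ℕ) : ℤ)) w = 0 := by
    rw [hv0 _ (Or.inr (by omega)), pd4_zero]
  have hD : pd4 0 (u ((k - m : ℕ) : ℤ)) w = 0 := by
    rw [hu0 _ (Or.inr (by omega)), pd4_zero]
  have hpair : (m : ℝ) * pd4 2 (u ((k - (m+1) : ℕ) : ℤ)) w
      = (n : ℝ) * pd4 2 (v ((k - (n+1) : ℕ) : ℤ)) w := by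
    by_cases hkk : k = n + m + 1
    · have hi1 : ((k - (m+1) : ℕ) : ℤ) = (n : ℤ) := by omega
      have hi2 : ((k - (n+1) : ℕ) : ℤ) = (m : ℤ) := by omega
      rw [hi1, hi2, hvm, pd4_const_mul 2 _ _ (hu (n:ℤ)) w]
      have hn0 : (n : ℝ) ≠ 0 := by positivity
      field_simp
    · have hz1 : u ((k - (m+1) : ℕ) : ℤ) = 0 := hu0 _ (Or.inr (by omega))
      have hz2 : v ((k - (n+1) : ℕ) : ℤ) = 0 := hv0 _ (Or.inr (by omega))
      rw [hz1, hz2]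
      simp [pd4_zero]
  have hSZ : ∑ i ∈ range (k+1),
      ((((k - i : ℕ) : ℝ) - 1) * v ((k - i : ℕ) : ℤ) w * pd4 2 (u (i:ℤ)) w
        - ((i : ℝ) - 1) * u (i:ℤ) w * pd4 2 (v ((k - i : ℕ) : ℤ)) w) = 0 := by
    apply Finset.sum_eq_zero
    intro i hi
    simp only [Finset.mem_range] at hi
    by_cases hin : i ≤ n
    · have hz : v ((k - i : ℕ) : ℤ) = 0 := hv0 _ (Or.inr (by omega))
      rw [hz, pd4_zero, Pi.zero_apply]
      ring
    · have hz : u ((i : ℕ) : ℤ) = 0 := hu0 _ (Or.inr (by omega))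
      rw [hz, pd4_zero, Pi.zero_apply]
      ring
  have hSX : ∑ i ∈ range (k+2),
      (((k + 1 - i : ℕ) : ℝ) * v ((k + 1 - i : ℕ) : ℤ) w * pd4 0 (u (i:ℤ)) w
        - (i : ℝ) * u (i:ℤ) w * pd4 0 (v ((k + 1 - i : ℕ) : ℤ)) w) = 0 := by
    apply Finset.sum_eq_zero
    intro i hi
    simp only [Finset.mem_range] at hi
    by_cases hin : i ≤ n
    · have hz : v ((k + 1 - i : ℕ) : ℤ) = 0 := hv0 _ (Or.inr (by omega))
      rw [hz, pd4_zero, Pi.zero_apply]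
      ring
    · have hz : u ((i : ℕ) : ℤ) = 0 := hu0 _ (Or.inr (by omega))
      rw [hz, pd4_zero, Pi.zero_apply]
      ring
  rw [hA, hB, hC, hD, hSZ, hSX]
  linarith [hpair]

/-- Example 2, multicomponent (3+1)-dimensional system: let `m > n ≥ 1`,
let `u i` (for `0 ≤ i ≤ n`) and `v j` (for `0 ≤ j ≤ m−1`) be C¹ functions on ℝ⁴
(indexed over ℤ with the conventions `u i = 0` for `i < 0` or `i > n`, `v j = 0` for
`j < 0` or `j > m`, and `v m = (m/n) u n`), and set
`f = p^{n+1} + Σ_{i=0}^{n} uᵢ pⁱ`, `g = p^{m+1} + Σ_{j=0}^{m} vⱼ pʲ`.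
Then `∂_t f − ∂_y g + {f,g}_L = 0` holds for all `(x,y,z,t,p) ∈ ℝ⁵` iff for all
`k = 0, …, n+m` and all `(x,y,z,t)` the system (gndkp) holds. -/
theorem example2_zero_curvature_iff_system (m n : ℕ) (hmn : m > n) (hn : 1 ≤ n)
    (u v : ℤ → (Fin 4 → ℝ) → ℝ)
    (hu : ∀ i : ℤ, ContDiff ℝ 1 (u i)) (hv : ∀ j : ℤ, ContDiff ℝ 1 (v j))
    (hu0 : ∀ i : ℤ, i < 0 ∨ (n : ℤ) < i → u i = 0)
    (hv0 : ∀ j : ℤ, j < 0 ∨ (m : ℤ) < j → v j = 0)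
    (hvm : v (m : ℤ) = fun w => ((m : ℝ) / (n : ℝ)) * u (n : ℤ) w)
    (f g : (Fin 5 → ℝ) → ℝ)
    (hf : f = fun r =>
      (r 4) ^ (n + 1) + ∑ i ∈ Finset.range (n + 1), u (i : ℤ) (proj45 r) * (r 4) ^ i)
    (hg : g = fun r =>
      (r 4) ^ (m + 1) + ∑ j ∈ Finset.range (m + 1), v (j : ℤ) (proj45 r) * (r 4) ^ j) :
    (∀ r : Fin 5 → ℝ, pd5 3 f r - pd5 1 g r + cbr5 f g r = 0) ↔
    (∀ k : ℕ, k ≤ n + m → ∀ w : Fin 4 → ℝ,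
      pd4 3 (u (k : ℤ)) w - pd4 1 (v (k : ℤ)) w
        + (m : ℝ) * pd4 2 (u ((k : ℤ) - (m : ℤ) - 1)) w
        - (n : ℝ) * pd4 2 (v ((k : ℤ) - (n : ℤ) - 1)) w
        + ((n : ℝ) + 1) * pd4 0 (v ((k : ℤ) - (n : ℤ))) w
        - ((m : ℝ) + 1) * pd4 0 (u ((k : ℤ) - (m : ℤ))) w
        + ∑ i ∈ Finset.Icc (max 0 ((k : ℤ) - (m : ℤ))) (min (n : ℤ) (k : ℤ)),
            ((((k : ℤ) - i - 1 : ℤ) : ℝ) * v ((k : ℤ) - i) w * pd4 2 (u i) w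
              - (((i - 1 : ℤ) : ℝ)) * u i w * pd4 2 (v ((k : ℤ) - i)) w)
        - ∑ i ∈ Finset.Icc (max 0 ((k : ℤ) + 1 - (m : ℤ))) (min (n : ℤ) ((k : ℤ) + 1)),
            ((((k : ℤ) + 1 - i : ℤ) : ℝ) * v ((k : ℤ) + 1 - i) w * pd4 0 (u i) w
              - ((i : ℤ) : ℝ) * u i w * pd4 0 (v ((k : ℤ) + 1 - i)) w)
        = 0) := by
  -- the coefficient polynomial of the curvature expression
  set P : (Fin 4 → ℝ) → Polynomial ℝ := fun w =>
    QQ n m (fun i => u (i:ℤ) w) (fun j => v (j:ℤ) w)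
      (fun i => pd4 3 (u (i:ℤ)) w) (fun j => pd4 1 (v (j:ℤ)) w)
      (fun i => pd4 0 (u (i:ℤ)) w) (fun j => pd4 0 (v (j:ℤ)) w)
      (fun i => pd4 2 (u (i:ℤ)) w) (fun j => pd4 2 (v (j:ℤ)) w) with hP
  have hEE : ∀ r : Fin 5 → ℝ,
      pd5 3 f r - pd5 1 g r + cbr5 f g r = (P (proj45 r)).eval (r 4) := by
    intro r
    exact E_eval n m (fun i => u (i:ℤ)) (fun j => v (j:ℤ))
      (fun i => hu (i:ℤ)) (fun j => hv (j:ℤ)) f g hf hg r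
  -- vanishing hypotheses for the coefficient sequences
  have hua : ∀ (w : Fin 4 → ℝ) (i : ℕ), n + 1 ≤ i → u (i:ℤ) w = 0 := by
    intro w i h; rw [hu0 (i:ℤ) (Or.inr (by omega))]; rfl
  have hva : ∀ (w : Fin 4 → ℝ) (j : ℕ), m + 1 ≤ j → v (j:ℤ) w = 0 := by
    intro w j h; rw [hv0 (j:ℤ) (Or.inr (by omega))]; rfl
  have hupd : ∀ (jj : Fin 4) (w : Fin 4 → ℝ) (i : ℕ), n + 1 ≤ i → pd4 jj (u (i:ℤ)) w = 0 := by
    intro jj w i h; rw [hu0 (i:ℤ) (Or.inr (by omega)), pd4_zero]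
  have hvpd : ∀ (jj : Fin 4) (w : Fin 4 → ℝ) (j : ℕ), m + 1 ≤ j → pd4 jj (v (j:ℤ)) w = 0 := by
    intro jj w j h; rw [hv0 (j:ℤ) (Or.inr (by omega)), pd4_zero]
  have hcoeff : ∀ (w : Fin 4 → ℝ) (k : ℕ), (P w).coeff k =
      pd4 3 (u (k:ℤ)) w - pd4 1 (v (k:ℤ)) w
      + (if m + 1 ≤ k then (m : ℝ) * pd4 2 (u ((k - (m+1) : ℕ) : ℤ)) w else 0)
      - (if n + 1 ≤ k then (n : ℝ) * pd4 2 (v ((k - (n+1) : ℕ) : ℤ)) w else 0)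
      + (if n ≤ k then ((n : ℝ) + 1) * pd4 0 (v ((k - n : ℕ) : ℤ)) w else 0)
      - (if m ≤ k then ((m : ℝ) + 1) * pd4 0 (u ((k - m : ℕ) : ℤ)) w else 0)
      + ∑ i ∈ range (k+1),
          ((((k - i : ℕ) : ℝ) - 1) * v ((k - i : ℕ) : ℤ) w * pd4 2 (u (i:ℤ)) w
            - ((i : ℝ) - 1) * u (i:ℤ) w * pd4 2 (v ((k - i : ℕ) : ℤ)) w)
      - ∑ i ∈ range (k+2),
          (((k + 1 - i : ℕ) : ℝ) * v ((k + 1 - i : ℕ) : ℤ) w * pd4 0 (u (i:ℤ)) w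
            - (i : ℝ) * u (i:ℤ) w * pd4 0 (v ((k + 1 - i : ℕ) : ℤ)) w) := by
    intro w k
    rw [hP]
    exact coeff_QQ n m _ _ _ _ _ _ _ _
      (hua w) (hupd 3 w) (hupd 0 w) (hupd 2 w)
      (hva w) (hvpd 1 w) (hvpd 0 w) (hvpd 2 w) k
  constructor
  · intro hE k hk w
    have hall : ∀ p : ℝ, (P w).eval p = 0 := by
      intro p
      have h5 := hE (Fin.snoc w p)
      rw [hEE] at h5
      have h1 : proj45 (Fin.snoc w p) = w := by
        funext i
        simp [proj45, Fin.snoc_castSucc]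
      have h2 : (Fin.snoc w p : Fin 5 → ℝ) 4 = p := by
        have h4 : (4 : Fin 5) = Fin.last 4 := rfl
        rw [h4, Fin.snoc_last]
      rw [h1, h2] at h5
      exact h5
    have hP0 : P w = 0 := by
      apply Polynomial.funext
      intro p
      rw [hall p]
      simp
    have hc : (P w).coeff k = 0 := by rw [hP0]; simp
    rw [hcoeff w k] at hc
    rw [← sysN_eq_sysZ m n u v hu0 hv0 k w]
    exact hc
  · intro hsys r
    rw [hEE r]
    have hP0 : P (proj45 r) = 0 := by
      apply Polynomial.ext
      intro k
      rw [Polynomial.coeff_zero, hcoeff (proj45 r) k]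
      by_cases hk : k ≤ n + m
      · rw [sysN_eq_sysZ m n u v hu0 hv0 k (proj45 r)]
        exact hsys k hk (proj45 r)
      · exact sysN_vanish m n hmn hn u v hu hu0 hv0 hvm k (by omega) (proj45 r)
    rw [hP0]
    simp
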